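/- arXiv:2109.15172 — 5 statements merged into one kernel-verified Lean document; each statement's English description precedes it below -/
import Mathlib

section
/- Let (X,d) be a metric space. Then for every isometric embedding f: X → X, the coarse entropy of f equals the coarse entropy of the identity map id_X; in particular, all isometric embeddings of X (and all isometries of X) have the same coarse entropy. -/
open Filter Set Metric
open scoped ENNReal

noncomputable section

/-- `p` represents a `δ`-pseudoorbit of `f` of length `n` starting at `x₀`:
`(p 0, p 1, …, p n)` with `p 0 = x₀` and `dist (f (p i)) (p (i+1)) ≤ δ` for `i < n`.
(Only the values `p 0, …, p n` are relevant.) -/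
def IsPseudoOrbit {X : Type*} [MetricSpace X] (f : X → X) (δ : ℝ) (n : ℕ) (x₀ : X)
    (p : ℕ → X) : Prop :=
  p 0 = x₀ ∧ ∀ i < n, dist (f (p i)) (p (i + 1)) ≤ δ

/-- The distance between two pseudoorbits of length `n`:
the maximum of `dist (p i) (q i)` over `0 ≤ i ≤ n`. -/
def orbitDist {X : Type*} [MetricSpace X] (n : ℕ) (p q : ℕ → X) : ℝ :=
  (Finset.range (n + 1)).sup' (by simp) fun i => dist (p i) (q i)

/-- A family `S` of pseudoorbits of length `n` is `R`-separated if any two distinct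
members are at pseudoorbit distance at least `R`. -/
def IsSepFamily {X : Type*} [MetricSpace X] (n : ℕ) (R : ℝ) (S : Set (ℕ → X)) : Prop :=
  ∀ p ∈ S, ∀ q ∈ S, p ≠ q → R ≤ orbitDist n p q

/-- `sepCard f n R δ x₀` is `s(f,n,R,δ,x₀)`: the supremum of cardinalities of
`R`-separated sets of `δ`-pseudoorbits of `f` of length `n` starting at `x₀`. -/
def sepCard {X : Type*} [MetricSpace X] (f : X → X) (n : ℕ) (R δ : ℝ) (x₀ : X) : ℝ≥0∞ :=
  ⨆ (S : Set (ℕ → X)) (_ : ∀ p ∈ S, IsPseudoOrbit f δ n x₀ p) (_ : IsSepFamily n R S),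
    (S.encard : ℝ≥0∞)

/-- Extended logarithm `[0,∞] → [0,∞]` (negative values are truncated to `0`). -/
def elog (x : ℝ≥0∞) : ℝ≥0∞ :=
  if x = ⊤ then ⊤ else ENNReal.ofReal (Real.log x.toReal)

/-- The coarse entropy of `f : X → X` computed at the basepoint `x₀`:
`h_∞(f) = lim_{δ→∞} lim_{R→∞} limsup_{n→∞} (1/n) log s(f,n,R,δ,x₀)`.
Since `s` is nondecreasing in `δ` and nonincreasing in `R`, the limits in `δ` and `R`
are the supremum over `δ > 0` and the infimum over `R > 0`, respectively. -/
def coarseEntropyAt {X : Type*} [MetricSpace X] (f : X → X) (x₀ : X) : ℝ≥0∞ :=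
  ⨆ (δ : ℝ) (_ : 0 < δ), ⨅ (R : ℝ) (_ : 0 < R),
    Filter.atTop.limsup fun n : ℕ => elog (sepCard f n R δ x₀) / (n : ℝ≥0∞)

end

noncomputable section Aux

lemma elog_mono : Monotone elog := by
  intro x y h
  unfold elog
  rcases eq_or_ne y ⊤ with hy | hy
  · simp [hy]
  have hx : x ≠ ⊤ := fun hx => hy (top_le_iff.mp (hx ▸ h))
  rw [if_neg hx, if_neg hy]
  rcases le_or_gt x.toReal 1 with h1 | h1
  · rw [ENNReal.ofReal_of_nonpos (Real.log_nonpos ENNReal.toReal_nonneg h1)]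
    exact zero_le
  · exact ENNReal.ofReal_le_ofReal
      (Real.log_le_log (by linarith) ((ENNReal.toReal_le_toReal hx hy).mpr h))

variable {X : Type*} [MetricSpace X]

lemma sepCard_transfer {f g : X → X} {n n' : ℕ} {R δ δ' : ℝ} {x₀ y₀ : X}
    (Φ : (ℕ → X) → (ℕ → X)) (hinj : Function.Injective Φ)
    (horb : ∀ p, IsPseudoOrbit f δ n x₀ p → IsPseudoOrbit g δ' n' y₀ (Φ p))
    (hd : ∀ p q, orbitDist n p q ≤ orbitDist n' (Φ p) (Φ q)) :
    sepCard f n R δ x₀ ≤ sepCard g n' R δ' y₀ := by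
  refine iSup_le fun S => iSup_le fun hS => iSup_le fun hsep => ?_
  have h1 : ∀ p ∈ Φ '' S, IsPseudoOrbit g δ' n' y₀ p := by
    rintro _ ⟨p, hp, rfl⟩; exact horb p (hS p hp)
  have h2 : IsSepFamily n' R (Φ '' S) := by
    rintro _ ⟨p, hp, rfl⟩ _ ⟨q, hq, rfl⟩ hne
    exact le_trans (hsep p hp q hq (fun h => hne (by rw [h]))) (hd p q)
  have hcard : (S.encard : ℝ≥0∞) = ((Φ '' S).encard : ℝ≥0∞) := by
    rw [hinj.injOn.encard_image]
  rw [hcard, sepCard]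
  exact le_iSup_of_le (Φ '' S) (le_iSup_of_le h1 (le_iSup_of_le h2 le_rfl))

lemma isometry_iterate {f : X → X} (hf : Isometry f) (i : ℕ) : Isometry f^[i] := by
  induction i with
  | zero => exact isometry_id
  | succ i ih => rw [Function.iterate_succ']; exact hf.comp ih

lemma dist_iterate_self {f : X → X} (hf : Isometry f) :
    ∀ (i : ℕ) (x : X), dist x (f^[i] x) ≤ i * dist x (f x) := by
  intro i
  induction i with
  | zero => simp
  | succ i ih =>
    intro x
    calc dist x (f^[i+1] x) ≤ dist x (f x) + dist (f x) (f^[i] (f x)) := by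
          rw [Function.iterate_succ_apply]; exact dist_triangle _ _ _
      _ ≤ dist x (f x) + i * dist (f x) (f (f x)) := by linarith [ih (f x)]
      _ = (↑(i+1)) * dist x (f x) := by rw [hf.dist_eq]; push_cast; ring

lemma sepCard_mono_delta {f : X → X} {n : ℕ} {R δ δ' : ℝ} {x₀ : X} (h : δ ≤ δ') :
    sepCard f n R δ x₀ ≤ sepCard f n R δ' x₀ :=
  sepCard_transfer id Function.injective_id
    (fun p hp => ⟨hp.1, fun i hi => (hp.2 i hi).trans h⟩) (fun _ _ => le_rfl)

lemma sepCard_id_le {f : X → X} (hf : Isometry f) {n : ℕ} {R δ : ℝ} {x₀ : X} :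
    sepCard (id : X → X) n R δ x₀ ≤ sepCard f n R δ x₀ := by
  refine sepCard_transfer (fun q i => f^[i] (q i)) ?_ ?_ ?_
  · intro p q h
    funext i
    exact (isometry_iterate hf i).injective (congrFun h i)
  · rintro p ⟨h0, hstep⟩
    refine ⟨by simpa using h0, fun i hi => ?_⟩
    show dist (f (f^[i] (p i))) (f^[i+1] (p (i+1))) ≤ δ
    rw [← Function.iterate_succ_apply' f i (p i), (isometry_iterate hf (i+1)).dist_eq]
    simpa using hstep i hi
  · intro p q
    simp only [orbitDist]
    refine Finset.sup'_le _ _ fun i hi => ?_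
    calc dist (p i) (q i) = dist (f^[i] (p i)) (f^[i] (q i)) :=
          ((isometry_iterate hf i).dist_eq _ _).symm
      _ ≤ _ := Finset.le_sup' (fun i => dist (f^[i] (p i)) (f^[i] (q i))) hi

lemma sepCard_f_le {f : X → X} (hf : Isometry f) {n : ℕ} {K : ℕ} (hK : 1 ≤ K) {R δ : ℝ}
    {x₀ : X} (hδc : (K : ℝ) * dist x₀ (f x₀) ≤ δ) :
    sepCard f n R δ x₀ ≤ sepCard (id : X → X) (n + (n / K + 1)) R δ x₀ := by
  set m : ℕ := n / K + 1 with hm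
  have hK0 : 0 < K := hK
  have hnmK : n ≤ m * K := by
    have h1 := Nat.div_add_mod n K
    have h2 := Nat.mod_lt n hK0
    calc n = K * (n / K) + n % K := h1.symm
      _ ≤ K * (n / K) + K := Nat.add_le_add_left h2.le _
      _ = (n / K + 1) * K := by ring
  set Φ : (ℕ → X) → (ℕ → X) := fun p j =>
    if j < m then f^[min (j * K) n] x₀ else f^[n - (j - m)] (p (j - m)) with hΦ
  have hΦmi : ∀ (p : ℕ → X) (i : ℕ), Φ p (m + i) = f^[n - i] (p i) := by
    intro p i
    simp only [hΦ]
    rw [if_neg (by omega), Nat.add_sub_cancel_left]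
  refine sepCard_transfer Φ ?_ ?_ ?_
  · intro p q h
    funext i
    have := congrFun h (m + i)
    rw [hΦmi, hΦmi] at this
    exact (isometry_iterate hf (n - i)).injective this
  · rintro p ⟨h0, hstep⟩
    have hpre : ∀ j ≤ m, Φ p j = f^[min (j * K) n] x₀ := by
      intro j hj
      rcases lt_or_eq_of_le hj with hj' | rfl
      · simp only [hΦ]; rw [if_pos hj']
      · have h' : Φ p (m + 0) = f^[n - 0] (p 0) := hΦmi p 0
        simpa [h0, min_eq_right hnmK] using h'
    constructor
    · have h' := hpre 0 (Nat.zero_le m)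
      simpa using h'
    · intro j hj
      simp only [id_eq]
      rcases lt_or_ge j m with hjm | hjm
      · -- prefix step
        rw [hpre j hjm.le, hpre (j + 1) hjm]
        set a := min (j * K) n with ha
        set b := min ((j + 1) * K) n with hb
        have hab : a ≤ b := min_le_min (Nat.mul_le_mul_right K (Nat.le_succ j)) le_rfl
        have hba : b - a ≤ K := by
          rcases le_or_gt n (j * K) with h | h
          · have h1 : a = n := min_eq_right h
            have h2 : b ≤ n := min_le_right _ _
            omega
          · have h1 : a = j * K := min_eq_left h.le
            have h2 : b ≤ (j + 1) * K := min_le_left _ _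
            have h3 : (j + 1) * K = j * K + K := by ring
            omega
        have hbd : b = a + (b - a) := by omega
        rw [hbd, Function.iterate_add_apply, (isometry_iterate hf a).dist_eq]
        calc dist x₀ (f^[b-a] x₀) ≤ (b - a : ℕ) * dist x₀ (f x₀) :=
              dist_iterate_self hf _ _
          _ ≤ (K : ℝ) * dist x₀ (f x₀) := by
              have hcast : ((b - a : ℕ) : ℝ) ≤ (K : ℝ) := by exact_mod_cast hba
              nlinarith [dist_nonneg (x := x₀) (y := f x₀)]
          _ ≤ δ := hδc
      · -- suffix step
        have hin : j - m < n := by omega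
        have h1 := hΦmi p (j - m)
        rw [show m + (j - m) = j by omega] at h1
        have h2 := hΦmi p (j - m + 1)
        rw [show m + (j - m + 1) = j + 1 by omega] at h2
        rw [h1, h2, show n - (j - m) = (n - (j - m + 1)) + 1 by omega,
          Function.iterate_succ_apply, (isometry_iterate hf (n - (j - m + 1))).dist_eq]
        exact hstep (j - m) hin
  · intro p q
    simp only [orbitDist]
    refine Finset.sup'_le _ _ fun i hi => ?_
    have hi' : i ≤ n := by simpa [Nat.lt_succ_iff] using hi
    calc dist (p i) (q i) = dist (Φ p (m + i)) (Φ q (m + i)) := by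
          rw [hΦmi, hΦmi, (isometry_iterate hf (n - i)).dist_eq]
      _ ≤ _ := Finset.le_sup' (fun j => dist (Φ p j) (Φ q j))
          (Finset.mem_range.mpr (by omega))
def entN (f : X → X) (δ R : ℝ) (x₀ : X) : ℝ≥0∞ :=
  Filter.atTop.limsup fun n : ℕ => elog (sepCard f n R δ x₀) / (n : ℝ≥0∞)

lemma coarseEntropyAt_def (f : X → X) (x₀ : X) :
    coarseEntropyAt f x₀ = ⨆ (δ : ℝ) (_ : 0 < δ), ⨅ (R : ℝ) (_ : 0 < R), entN f δ R x₀ :=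
  rfl

lemma entN_id_le {f : X → X} (hf : Isometry f) (δ R : ℝ) (x₀ : X) :
    entN (id : X → X) δ R x₀ ≤ entN f δ R x₀ :=
  Filter.limsup_le_limsup (Filter.Eventually.of_forall fun n =>
    ENNReal.div_le_div_right (elog_mono (sepCard_id_le hf)) _)

lemma entN_mono_delta {f : X → X} {δ δ' : ℝ} (h : δ ≤ δ') (R : ℝ) (x₀ : X) :
    entN f δ R x₀ ≤ entN f δ' R x₀ :=
  Filter.limsup_le_limsup (Filter.Eventually.of_forall fun n =>
    ENNReal.div_le_div_right (elog_mono (sepCard_mono_delta h)) _)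

lemma entN_f_le {f : X → X} (hf : Isometry f) {K : ℕ} (hK : 1 ≤ K) {R δ : ℝ} {x₀ : X}
    (hδc : (K : ℝ) * dist x₀ (f x₀) ≤ δ) :
    entN f δ R x₀ ≤ (1 + 2 / (K : ℝ≥0∞)) * entN (id : X → X) δ R x₀ := by
  set a : ℝ≥0∞ := 1 + 2 / (K : ℝ≥0∞) with ha
  have hKne : (K : ℝ≥0∞) ≠ 0 := Nat.cast_ne_zero.mpr (by omega)
  have hKtop : (K : ℝ≥0∞) ≠ ⊤ := ENNReal.natCast_ne_top K
  have hatop : a ≠ ⊤ := by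
    rw [ha]
    exact ENNReal.add_ne_top.mpr ⟨ENNReal.one_ne_top,
      (ENNReal.div_lt_top (by simp) hKne).ne⟩
  set φ : ℕ → ℕ := fun n => n + (n / K + 1) with hφ
  set v : ℕ → ℝ≥0∞ := fun n => elog (sepCard (id : X → X) n R δ x₀) / (n : ℝ≥0∞) with hv
  have h1 : ∀ n ≥ K, elog (sepCard f n R δ x₀) / (n : ℝ≥0∞) ≤ a * v (φ n) := by
    intro n hn
    have hn0 : (n : ℝ≥0∞) ≠ 0 := Nat.cast_ne_zero.mpr (by omega)
    have hφ0 : (φ n : ℝ≥0∞) ≠ 0 := Nat.cast_ne_zero.mpr (by simp [hφ])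
    have hφt : (φ n : ℝ≥0∞) ≠ ⊤ := ENNReal.natCast_ne_top _
    have hd1 : ((n / K : ℕ) : ℝ≥0∞) ≤ (n : ℝ≥0∞) / K := by
      rw [ENNReal.le_div_iff_mul_le (Or.inl hKne) (Or.inl hKtop)]
      exact_mod_cast Nat.cast_le.mpr (Nat.div_mul_le_self n K)
    have hd2 : (1 : ℝ≥0∞) ≤ (n : ℝ≥0∞) / K := by
      rw [ENNReal.le_div_iff_mul_le (Or.inl hKne) (Or.inl hKtop), one_mul]
      exact_mod_cast Nat.cast_le.mpr hn
    have key : (φ n : ℝ≥0∞) ≤ a * n := by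
      calc (φ n : ℝ≥0∞) = (n : ℝ≥0∞) + ((n / K : ℕ) : ℝ≥0∞) + 1 := by
            simp only [hφ]; push_cast; ring
        _ ≤ (n : ℝ≥0∞) + (n : ℝ≥0∞) / K + (n : ℝ≥0∞) / K :=
            add_le_add (add_le_add le_rfl hd1) hd2
        _ = a * n := by
            rw [ha]; simp only [div_eq_mul_inv]; ring
    have h2' : (φ n : ℝ≥0∞) / n ≤ a :=
      (ENNReal.div_le_iff hn0 (ENNReal.natCast_ne_top n)).mpr key
    have hinv : 1 / (n : ℝ≥0∞) ≤ a / (φ n : ℝ≥0∞) := by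
      rw [ENNReal.le_div_iff_mul_le (Or.inl hφ0) (Or.inl hφt)]
      calc 1 / (n : ℝ≥0∞) * (φ n : ℝ≥0∞) = (φ n : ℝ≥0∞) / n := by
            rw [one_div, div_eq_mul_inv]; ring
        _ ≤ a := h2'
    calc elog (sepCard f n R δ x₀) / (n : ℝ≥0∞)
        ≤ elog (sepCard (id : X → X) (φ n) R δ x₀) / (n : ℝ≥0∞) :=
          ENNReal.div_le_div_right (elog_mono (sepCard_f_le hf hK hδc)) _
      _ = elog (sepCard (id : X → X) (φ n) R δ x₀) * (1 / (n : ℝ≥0∞)) := by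
          rw [div_eq_mul_inv, one_div]
      _ ≤ elog (sepCard (id : X → X) (φ n) R δ x₀) * (a / (φ n : ℝ≥0∞)) :=
          mul_le_mul_right hinv _
      _ = a * v (φ n) := by
          simp only [hv]; rw [div_eq_mul_inv, div_eq_mul_inv]; ring
  calc entN f δ R x₀
      ≤ Filter.atTop.limsup (fun n => a * v (φ n)) :=
        Filter.limsup_le_limsup (Filter.eventually_atTop.mpr ⟨K, h1⟩)
    _ = a * Filter.atTop.limsup (v ∘ φ) := ENNReal.limsup_const_mul_of_ne_top hatop
    _ ≤ a * Filter.atTop.limsup v := by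
        refine mul_le_mul_right ?_ a
        rw [Filter.limsup_comp]
        exact Filter.limsup_le_limsup_of_le
          (tendsto_atTop_mono (fun n => Nat.le_add_right n _) tendsto_id)
    _ = a * entN (id : X → X) δ R x₀ := rfl
lemma coarseEntropy_eq_id {f : X → X} (hf : Isometry f) (x₀ : X) :
    coarseEntropyAt f x₀ = coarseEntropyAt (id : X → X) x₀ := by
  have easy : coarseEntropyAt (id : X → X) x₀ ≤ coarseEntropyAt f x₀ := by
    rw [coarseEntropyAt_def, coarseEntropyAt_def]
    exact iSup₂_mono fun δ _ => iInf₂_mono fun R _ => entN_id_le hf δ R x₀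
  refine le_antisymm ?_ easy
  have hard : ∀ K : ℕ, 1 ≤ K →
      coarseEntropyAt f x₀ ≤ (1 + 2 / (K : ℝ≥0∞)) * coarseEntropyAt (id : X → X) x₀ := by
    intro K hK
    set a : ℝ≥0∞ := 1 + 2 / (K : ℝ≥0∞) with ha
    have ha1 : (1 : ℝ≥0∞) ≤ a := le_self_add
    have ha0 : a ≠ 0 := by intro h; rw [h] at ha1; simp at ha1
    have hatop : a ≠ ⊤ := by
      rw [ha]
      exact ENNReal.add_ne_top.mpr ⟨ENNReal.one_ne_top,
        (ENNReal.div_lt_top (by simp) (Nat.cast_ne_zero.mpr (by omega))).ne⟩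
    rw [coarseEntropyAt_def, coarseEntropyAt_def]
    refine iSup₂_le fun δ hδ => ?_
    set δ' : ℝ := max δ ((K : ℝ) * dist x₀ (f x₀) + 1) with hδ'
    have hδ'1 : δ ≤ δ' := le_max_left _ _
    have hδ'pos : 0 < δ' := lt_of_lt_of_le hδ hδ'1
    have hδ'c : (K : ℝ) * dist x₀ (f x₀) ≤ δ' :=
      le_trans (by linarith) (le_max_right _ _)
    calc ⨅ (R : ℝ) (_ : 0 < R), entN f δ R x₀
        ≤ ⨅ (R : ℝ) (_ : 0 < R), entN f δ' R x₀ :=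
          iInf₂_mono fun R _ => entN_mono_delta hδ'1 R x₀
      _ ≤ ⨅ (R : ℝ) (_ : 0 < R), a * entN (id : X → X) δ' R x₀ :=
          iInf₂_mono fun R _ => entN_f_le hf hK hδ'c
      _ = a * ⨅ (R : ℝ) (_ : 0 < R), entN (id : X → X) δ' R x₀ := by
          rw [ENNReal.mul_iInf_of_ne ha0 hatop]
          exact iInf_congr fun R => (ENNReal.mul_iInf_of_ne ha0 hatop).symm
      _ ≤ a * ⨆ (δ'' : ℝ) (_ : 0 < δ''), ⨅ (R : ℝ) (_ : 0 < R),
            entN (id : X → X) δ'' R x₀ :=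
          mul_le_mul_right (le_iSup₂_of_le δ' hδ'pos le_rfl) a
  refine ENNReal.le_of_forall_pos_le_add fun ε hε hlt => ?_
  set B := coarseEntropyAt (id : X → X) x₀ with hB
  have hBtop : B ≠ ⊤ := hlt.ne
  have hεne : (ε : ℝ≥0∞) ≠ 0 := ENNReal.coe_ne_zero.mpr hε.ne'
  obtain ⟨K₀, hK₀⟩ := ENNReal.exists_nat_gt
    (r := 2 * B / (ε : ℝ≥0∞))
    ((ENNReal.div_lt_top (ENNReal.mul_ne_top (by simp) hBtop) hεne).ne)
  set K := max K₀ 1 with hKdef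
  have hK1 : 1 ≤ K := le_max_right _ _
  have h := hard K hK1
  have h2 : 2 * B / (ε : ℝ≥0∞) < (K : ℝ≥0∞) :=
    lt_of_lt_of_le hK₀ (Nat.cast_le.mpr (le_max_left _ _))
  have h3 : 2 * B < (K : ℝ≥0∞) * ε :=
    (ENNReal.div_lt_iff (Or.inl hεne) (Or.inl ENNReal.coe_ne_top)).mp h2
  have h4 : 2 * B / (K : ℝ≥0∞) ≤ (ε : ℝ≥0∞) :=
    (ENNReal.div_le_iff (Nat.cast_ne_zero.mpr (by omega)) (ENNReal.natCast_ne_top K)).mpr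
      (by rw [mul_comm (ε : ℝ≥0∞) (K : ℝ≥0∞)]; exact h3.le)
  calc coarseEntropyAt f x₀ ≤ (1 + 2 / (K : ℝ≥0∞)) * B := h
    _ = B + 2 * B / (K : ℝ≥0∞) := by simp only [div_eq_mul_inv]; ring
    _ ≤ B + ε := add_le_add le_rfl h4


end Aux

/-- For a metric space `X`, the coarse entropy of any isometric embedding
`f : X → X` equals the coarse entropy of the identity map; in particular all isometric
embeddings of `X` (and all isometries) have the same coarse entropy. -/
theorem coarseEntropy_isometricEmbedding_eq_id {X : Type*} [MetricSpace X]
    (f : X → X) (hf : Isometry f) (x₀ : X) :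
    coarseEntropyAt f x₀ = coarseEntropyAt (id : X → X) x₀ ∧
    ∀ g : X → X, Isometry g → coarseEntropyAt f x₀ = coarseEntropyAt g x₀ :=
  ⟨coarseEntropy_eq_id hf x₀, fun g hg => by
    rw [coarseEntropy_eq_id hf x₀, coarseEntropy_eq_id hg x₀]⟩
end

section
/- Let X be a normed vector space over ℝ of infinite dimension. Then the coarse entropy of X is infinite: h_∞(X) = ∞. -/
open Filter Set Metric
open scoped ENNReal

/-- An infinite-dimensional normed vector space over `ℝ` has infinite
coarse entropy (at every basepoint; the coarse entropy of the space is the coarse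
entropy of the identity map). -/
theorem coarseEntropy_of_infinite_dimensional {E : Type*} [NormedAddCommGroup E]
    [NormedSpace ℝ E] (h : ¬ FiniteDimensional ℝ E) (x₀ : E) :
    coarseEntropyAt (id : E → E) x₀ = ⊤ := by
  obtain ⟨R₀, f, hR₀, hfnorm, hfsep⟩ := exists_seq_norm_le_one_le_norm_sub h
  have hR₀0 : (0:ℝ) < R₀ := by linarith
  set v : ℕ → E := fun j => R₀⁻¹ • f j with hv
  have hvnorm : ∀ j, ‖v j‖ ≤ 1 := by
    intro j
    rw [hv]
    simp only [norm_smul, norm_inv, Real.norm_of_nonneg hR₀0.le]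
    rw [inv_mul_le_iff₀ hR₀0]
    simpa using hfnorm j
  have hvsep : ∀ j k, j ≠ k → R₀⁻¹ ≤ ‖v j - v k‖ := by
    intro j k hjk
    rw [hv]
    simp only [← smul_sub, norm_smul, norm_inv, Real.norm_of_nonneg hR₀0.le]
    calc R₀⁻¹ = R₀⁻¹ * 1 := by ring
      _ ≤ R₀⁻¹ * ‖f j - f k‖ :=
          mul_le_mul_of_nonneg_left (hfsep hjk) (by positivity)
  refine le_antisymm le_top ?_
  rw [coarseEntropyAt]
  refine le_trans ?_ (le_iSup₂ (f := fun (δ : ℝ) (_ : 0 < δ) => ⨅ (R : ℝ) (_ : 0 < R),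
    Filter.atTop.limsup fun n : ℕ => elog (sepCard (id : E → E) n R δ x₀) / (n : ℝ≥0∞))
    (1:ℝ) one_pos)
  rw [le_iInf₂_iff]
  intro R hR
  set m : ℕ := ⌈R * R₀⌉₊ + 1 with hm
  have hm1 : 1 ≤ m := Nat.le_add_left 1 _
  have hmR : R * R₀ ≤ (m : ℝ) := by
    calc R * R₀ ≤ (⌈R * R₀⌉₊ : ℝ) := Nat.le_ceil _
      _ ≤ (m : ℝ) := by exact_mod_cast Nat.le_succ _
  have key : ∀ n, m ≤ n → sepCard (id : E → E) n R 1 x₀ = ⊤ := by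
    intro n hn
    set P : ℕ → (ℕ → E) := fun j i => x₀ + ((min i m : ℕ) : ℝ) • v j with hP
    have hdistm : ∀ j k, dist (P j m) (P k m) = (m : ℝ) * ‖v j - v k‖ := by
      intro j k
      simp only [hP, dist_eq_norm, min_self]
      rw [add_sub_add_left_eq_sub, ← smul_sub, norm_smul, Real.norm_natCast]
    have hsepjk : ∀ j k, j ≠ k → R ≤ dist (P j m) (P k m) := by
      intro j k hjk
      rw [hdistm]
      calc R = R * R₀ * R₀⁻¹ := by field_simp
        _ ≤ (m : ℝ) * ‖v j - v k‖ := by gcongr; exact hvsep j k hjk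
    have hPinj : Function.Injective P := by
      intro j k hjk
      by_contra hne
      have := hsepjk j k hne
      rw [hjk, dist_self] at this
      linarith
    have hpseudo : ∀ j, IsPseudoOrbit (id : E → E) 1 n x₀ (P j) := by
      intro j
      constructor
      · simp [hP]
      · intro i _
        simp only [id_eq, hP, dist_eq_norm, add_sub_add_left_eq_sub, ← sub_smul, norm_smul]
        rcases lt_or_ge i m with him | him
        · have : min (i + 1) m = min i m + 1 := by omega
          rw [this, min_eq_left him.le]
          push_cast
          simp only [sub_add_cancel_left, norm_neg, norm_one, one_mul]
          exact hvnorm j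
        · have h1 : min i m = m := min_eq_right him
          have h2 : min (i + 1) m = m := min_eq_right (by omega)
          rw [h1, h2]
          simp
    have hsep : IsSepFamily n R (Set.range P) := by
      rintro p ⟨j, rfl⟩ q ⟨k, rfl⟩ hpq
      have hjk : j ≠ k := fun e => hpq (by rw [e])
      calc R ≤ dist (P j m) (P k m) := hsepjk j k hjk
        _ ≤ orbitDist n (P j) (P k) :=
          Finset.le_sup' (fun i => dist (P j i) (P k i))
            (Finset.mem_range.mpr (by omega))
    refine le_antisymm le_top ?_
    rw [sepCard]
    refine le_trans ?_ (le_iSup _ (Set.range P))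
    refine le_trans ?_ (le_iSup _ (by rintro p ⟨j, rfl⟩; exact hpseudo j))
    refine le_trans ?_ (le_iSup _ hsep)
    rw [(Set.infinite_range_of_injective hPinj).encard_eq]
    simp
  have hev : (fun n : ℕ => elog (sepCard (id : E → E) n R 1 x₀) / (n : ℝ≥0∞))
      =ᶠ[Filter.atTop] (fun _ => (⊤ : ℝ≥0∞)) := by
    filter_upwards [Filter.eventually_ge_atTop m] with n hn
    rw [key n hn]
    rw [show elog ⊤ = ⊤ from if_pos rfl]
    exact ENNReal.top_div_of_ne_top (by simp)
  rw [Filter.limsup_congr hev, Filter.limsup_const]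
end

section
/- The following conditions are equivalent for a metric space X: (i) there exists s > 0 such that for every D > 0 there exists a constant C'(D) ∈ ℕ such that every s-separated subset of X of diameter at most D has cardinality at most C'(D); (ii) X contains a coarsely dense subset with bounded geometry; (iii) X is quasi-isometric to a metric space with bounded geometry; (iv) X is coarsely equivalent to a metric space with bounded geometry. -/
open Filter Set Metric

/-- A metric space has bounded geometry if for every radius `r > 0` there is a uniform
bound `C(r) ∈ ℕ` on the cardinalities of closed balls of radius `r`. -/
def HasBoundedGeometry (X : Type*) [MetricSpace X] : Prop :=
  ∀ r : ℝ, 0 < r → ∃ C : ℕ, ∀ x : X, (Metric.closedBall x r).encard ≤ C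

/-- `f : X → Y` is a coarse embedding. -/
def IsCoarseEmbedding {X Y : Type*} [MetricSpace X] [MetricSpace Y] (f : X → Y) : Prop :=
  ∃ ρminus ρplus : ℝ → ℝ, Monotone ρminus ∧ Monotone ρplus ∧
    Filter.Tendsto ρminus Filter.atTop Filter.atTop ∧
    ∀ x x' : X, ρminus (dist x x') ≤ dist (f x) (f x') ∧
      dist (f x) (f x') ≤ ρplus (dist x x')

/-- `f : X → Y` is a coarse equivalence: a coarse embedding with coarsely dense image. -/
def IsCoarseEquiv {X Y : Type*} [MetricSpace X] [MetricSpace Y] (f : X → Y) : Prop :=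
  IsCoarseEmbedding f ∧ ∃ A : ℝ, 0 ≤ A ∧ ∀ y : Y, ∃ x : X, dist y (f x) < A

/-- `f : X → Y` is a quasi-isometry: a `(C,A)`-quasi-isometric embedding whose image is
`A`-dense, for some `C ≥ 1`, `A ≥ 0`. -/
def IsQuasiIsometry {X Y : Type*} [MetricSpace X] [MetricSpace Y] (f : X → Y) : Prop :=
  ∃ C A : ℝ, 1 ≤ C ∧ 0 ≤ A ∧
    (∀ x x' : X, C⁻¹ * dist x x' - A ≤ dist (f x) (f x') ∧
      dist (f x) (f x') ≤ C * dist x x' + A) ∧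
    ∀ y : Y, ∃ x : X, dist y (f x) ≤ A

/-- The following are equivalent for a metric space `X`:
(i) there is `s > 0` such that for every `D > 0` there is `C'(D) ∈ ℕ` bounding the
cardinality of every `s`-separated subset of `X` of diameter at most `D`;
(ii) `X` contains a coarsely dense subset with bounded geometry;
(iii) `X` is quasi-isometric to a metric space with bounded geometry;
(iv) `X` is coarsely equivalent to a metric space with bounded geometry. -/
theorem tfae_coarselyEquiv_boundedGeometry {X : Type u} [MetricSpace X] :
    List.TFAE
      [ ∃ s : ℝ, 0 < s ∧ ∀ D : ℝ, 0 < D → ∃ C : ℕ, ∀ T : Set X,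
          (∀ x ∈ T, ∀ y ∈ T, x ≠ y → s ≤ dist x y) →
          (∀ x ∈ T, ∀ y ∈ T, dist x y ≤ D) → T.encard ≤ C,
        ∃ Z : Set X, (∃ A : ℝ, 0 ≤ A ∧ ∀ x : X, ∃ z ∈ Z, dist x z < A) ∧
          HasBoundedGeometry Z,
        ∃ (Y : Type u) (mY : MetricSpace Y), @HasBoundedGeometry Y mY ∧
          ∃ f : X → Y, @IsQuasiIsometry X Y _ mY f,
        ∃ (Y : Type u) (mY : MetricSpace Y), @HasBoundedGeometry Y mY ∧
          ∃ f : X → Y, @IsCoarseEquiv X Y _ mY f ] := by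
  tfae_have 1 → 2 := by
    rintro ⟨s, hs, hC⟩
    -- take a maximal s-separated set
    set S : Set (Set X) := {T | ∀ x ∈ T, ∀ y ∈ T, x ≠ y → s ≤ dist x y} with hS
    obtain ⟨Z, hZmax⟩ := zorn_subset S (by
      intro c hc hchain
      refine ⟨⋃₀ c, ?_, fun t ht => subset_sUnion_of_mem ht⟩
      rintro x ⟨t, htc, hxt⟩ y ⟨t', ht'c, hyt'⟩ hxy
      rcases hchain.total htc ht'c with h | h
      · exact hc ht'c x (h hxt) y hyt' hxy
      · exact hc htc x hxt y (h hyt') hxy)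
    have hZsep : Z ∈ S := hZmax.1
    refine ⟨Z, ⟨s, le_of_lt hs, ?_⟩, ?_⟩
    · -- coarse density with constant s
      intro x
      by_cases hx : x ∈ Z
      · exact ⟨x, hx, by simpa using hs⟩
      by_contra hcon
      push_neg at hcon
      have hins : insert x Z ∈ S := by
        rintro a (rfl | ha) b (rfl | hb) hab
        · exact absurd rfl hab
        · exact hcon b hb
        · rw [dist_comm]; exact hcon a ha
        · exact hZsep a ha b hb hab
      have := hZmax.2 hins (subset_insert x Z)
      exact hx (this (mem_insert x Z))
    · -- bounded geometry
      intro r hr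
      obtain ⟨C, hCb⟩ := hC (2 * r) (by linarith)
      refine ⟨C, fun z => ?_⟩
      have hinj : Set.InjOn (Subtype.val : Z → X) (Metric.closedBall z r) :=
        Subtype.val_injective.injOn
      rw [← hinj.encard_image]
      refine hCb _ ?_ ?_
      · rintro x ⟨a, _, rfl⟩ y ⟨b, _, rfl⟩ hxy
        exact hZsep a a.2 b b.2 hxy
      · rintro x ⟨a, ha, rfl⟩ y ⟨b, hb, rfl⟩
        have ha' : dist a z ≤ r := Metric.mem_closedBall.mp ha
        have hb' : dist b z ≤ r := Metric.mem_closedBall.mp hb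
        have ha'' : dist (a : X) (z : X) ≤ r := by rwa [Subtype.dist_eq] at ha'
        have hb'' : dist (b : X) (z : X) ≤ r := by rwa [Subtype.dist_eq] at hb'
        calc dist (a : X) (b : X) ≤ dist (a : X) (z : X) + dist (z : X) (b : X) :=
              dist_triangle _ _ _
          _ ≤ r + r := by rw [dist_comm (z : X)]; linarith
          _ = 2 * r := by ring
  tfae_have 2 → 3 := by
    rintro ⟨Z, ⟨A, hA0, hdense⟩, hbg⟩
    choose g hg1 hg2 using hdense
    refine ⟨Z, inferInstance, hbg, fun x => ⟨g x, hg1 x⟩, 1, 2 * A, le_refl 1,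
      by linarith, fun x x' => ?_, fun y => ⟨(y : X), ?_⟩⟩
    · have h1 : dist (g x) (g x') ≤ dist x x' + 2 * A := by
        have := dist_triangle4 (g x) x x' (g x')
        have hx := hg2 x; have hx' := hg2 x'
        rw [dist_comm (g x) x] at this
        linarith
      have h2 : dist x x' ≤ dist (g x) (g x') + 2 * A := by
        have := dist_triangle4 x (g x) (g x') x'
        have hx := hg2 x; have hx' := hg2 x'
        rw [dist_comm (g x') x'] at this
        linarith
      constructor
      · rw [Subtype.dist_eq]
        show (1:ℝ)⁻¹ * dist x x' - 2 * A ≤ dist (g x) (g x')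
        simp only [inv_one, one_mul]; linarith
      · rw [Subtype.dist_eq]
        show dist (g x) (g x') ≤ 1 * dist x x' + 2 * A
        simp only [one_mul]; linarith
    · rw [Subtype.dist_eq]
      show dist (y : X) (g (y : X)) ≤ 2 * A
      have := hg2 (y : X)
      linarith
  tfae_have 3 → 4 := by
    rintro ⟨Y, mY, hbg, f, C, A, hC1, hA0, hqi, hdense⟩
    have hC0 : (0:ℝ) < C := lt_of_lt_of_le one_pos hC1
    refine ⟨Y, mY, hbg, f, ⟨fun r => C⁻¹ * r - A, fun r => C * r + A, ?_, ?_, ?_,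
      fun x x' => hqi x x'⟩, A + 1, by linarith, fun y => ?_⟩
    · intro a b hab
      have : C⁻¹ * a ≤ C⁻¹ * b := by
        apply mul_le_mul_of_nonneg_left hab (le_of_lt (inv_pos.mpr hC0))
      simpa [sub_eq_add_neg] using add_le_add_right this (-A)
    · intro a b hab
      have : C * a ≤ C * b := mul_le_mul_of_nonneg_left hab (le_of_lt hC0)
      simpa using add_le_add_right this A
    · have h1 : Filter.Tendsto (fun r : ℝ => C⁻¹ * r) Filter.atTop Filter.atTop :=
        Filter.Tendsto.const_mul_atTop (inv_pos.mpr hC0) Filter.tendsto_id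
      simpa [sub_eq_add_neg] using Filter.tendsto_atTop_add_const_right _ (-A) h1
    · obtain ⟨x, hx⟩ := hdense y
      exact ⟨x, lt_of_le_of_lt hx (by linarith)⟩
  tfae_have 4 → 1 := by
    rintro ⟨Y, mY, hbg, f, ⟨ρm, ρp, hρm, hρp, htend, hbound⟩, A, hA0, hdense⟩
    obtain ⟨s0, hs0⟩ := (Filter.eventually_atTop).mp (htend.eventually_gt_atTop 0)
    set s : ℝ := max s0 1 with hsdef
    have hspos : (0:ℝ) < s := lt_of_lt_of_le one_pos (le_max_right _ _)
    have hρs : 0 < ρm s := hs0 s (le_max_left _ _)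
    refine ⟨s, hspos, fun D hD => ?_⟩
    set r : ℝ := max (ρp D) 1 with hrdef
    obtain ⟨C, hCb⟩ := hbg r (lt_of_lt_of_le one_pos (le_max_right _ _))
    refine ⟨C, fun T hsep hdiam => ?_⟩
    rcases T.eq_empty_or_nonempty with rfl | ⟨t0, ht0⟩
    · simp
    have hinj : Set.InjOn f T := by
      intro x hx y hy hfxy
      by_contra hxy
      have h1 : s ≤ dist x y := hsep x hx y hy hxy
      have h2 : ρm s ≤ ρm (dist x y) := hρm h1
      have h3 : ρm (dist x y) ≤ dist (f x) (f y) := (hbound x y).1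
      rw [hfxy, dist_self] at h3
      linarith
    rw [← hinj.encard_image]
    refine le_trans (Set.encard_mono ?_) (hCb (f t0))
    rintro y ⟨t, ht, rfl⟩
    have h1 : dist (f t) (f t0) ≤ ρp (dist t t0) := (hbound t t0).2
    have h2 : ρp (dist t t0) ≤ ρp D := hρp (hdiam t ht t0 ht0)
    exact Metric.mem_closedBall.mpr (le_trans h1 (le_trans h2 (le_max_left _ _)))
  tfae_finish
end

section
/- Let X be a metric space such that for every δ > 0 every δ-component of X is bounded. Then the coarse entropy of X is zero: h_∞(X) = 0. -/
open Filter Set Metric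
open scoped ENNReal

/-- The `δ`-component of `x`: all points connected to `x` by some `δ`-path. -/
def deltaComponent {X : Type*} [MetricSpace X] (δ : ℝ) (x : X) : Set X :=
  {y | ∃ (n : ℕ) (p : ℕ → X), p 0 = x ∧ p n = y ∧ ∀ i < n, dist (p i) (p (i + 1)) ≤ δ}

/-- If every `δ`-component of a metric space `X` is bounded (for every
`δ > 0`), then the coarse entropy of `X` is zero. -/
theorem coarseEntropy_zero_of_bounded_components {X : Type*} [MetricSpace X]
    (h : ∀ δ : ℝ, 0 < δ → ∀ x : X, Bornology.IsBounded (deltaComponent δ x)) (x₀ : X) :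
    coarseEntropyAt (id : X → X) x₀ = 0 := by
  rw [coarseEntropyAt]
  refine le_antisymm (iSup_le fun δ => iSup_le fun hδ => ?_) zero_le
  obtain ⟨D, hD⟩ := (Metric.isBounded_iff).mp (h δ hδ x₀)
  have hx0 : x₀ ∈ deltaComponent δ x₀ :=
    ⟨0, fun _ => x₀, rfl, rfl, fun i hi => absurd hi (Nat.not_lt_zero i)⟩
  have hD0 : 0 ≤ D := by simpa using hD hx0 hx0
  refine le_trans (iInf₂_le (D + 1) (by linarith)) ?_
  have key : ∀ n : ℕ, elog (sepCard id n (D + 1) δ x₀) / (n : ℝ≥0∞) = 0 := by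
    intro n
    have hsep : sepCard id n (D + 1) δ x₀ ≤ 1 := by
      refine iSup_le fun S => iSup_le fun hS => iSup_le fun hsepf => ?_
      have hsub : S.Subsingleton := by
        intro p hp q hq
        by_contra hne
        have h1 := hsepf p hp q hq hne
        have h2 : orbitDist n p q ≤ D := by
          apply Finset.sup'_le
          intro i hi
          have hin : i ≤ n := Nat.lt_succ_iff.mp (Finset.mem_range.mp hi)
          have hpi : p i ∈ deltaComponent δ x₀ :=
            ⟨i, p, (hS p hp).1, rfl, fun j hj => (hS p hp).2 j (lt_of_lt_of_le hj hin)⟩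
          have hqi : q i ∈ deltaComponent δ x₀ :=
            ⟨i, q, (hS q hq).1, rfl, fun j hj => (hS q hq).2 j (lt_of_lt_of_le hj hin)⟩
          exact hD hpi hqi
        linarith
      have hcard : S.encard ≤ 1 := Set.encard_le_one_iff.mpr (fun a b ha hb => hsub ha hb)
      exact_mod_cast hcard
    have hne : sepCard id n (D + 1) δ x₀ ≠ ⊤ :=
      fun htop => by simp [htop] at hsep
    have helog : elog (sepCard id n (D + 1) δ x₀) = 0 := by
      rw [elog, if_neg hne]
      have hle : (sepCard id n (D + 1) δ x₀).toReal ≤ 1 := by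
        have := ENNReal.toReal_mono (by simp) hsep
        simpa using this
      simp [ENNReal.ofReal_eq_zero.mpr (Real.log_nonpos ENNReal.toReal_nonneg hle)]
    rw [helog, ENNReal.zero_div]
  have hfun : (fun n : ℕ => elog (sepCard id n (D + 1) δ x₀) / (n : ℝ≥0∞)) =
      fun _ : ℕ => (0 : ℝ≥0∞) := funext key
  rw [hfun, Filter.limsup_const]
end

section
/- The coarse entropy of every ultrametric space is zero: if the metric d on X satisfies d(x,z) ≤ max(d(x,y), d(y,z)) for all x, y, z ∈ X, then h_∞(X) = 0. -/
open Filter Set Metric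
open scoped ENNReal

/-- Every ultrametric space has zero coarse entropy. -/
theorem coarseEntropy_zero_of_ultrametric {X : Type*} [MetricSpace X]
    (h : ∀ x y z : X, dist x z ≤ max (dist x y) (dist y z)) (x₀ : X) :
    coarseEntropyAt (id : X → X) x₀ = 0 := by
  have key : ∀ δ : ℝ, 0 < δ → ∀ n : ℕ, sepCard (id : X → X) n (δ + 1) δ x₀ ≤ 1 := by
    intro δ hδ n
    refine iSup_le fun S => iSup_le fun hS => iSup_le fun hsep => ?_
    have chain : ∀ r, IsPseudoOrbit (id : X → X) δ n x₀ r → ∀ j ≤ n, dist x₀ (r j) ≤ δ := by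
      intro r hr j hj
      induction j with
      | zero => simp [hr.1, hδ.le]
      | succ j ih =>
        have hjn : j < n := hj
        calc dist x₀ (r (j + 1)) ≤ max (dist x₀ (r j)) (dist (r j) (r (j + 1))) := h _ _ _
          _ ≤ δ := max_le (ih hjn.le) (by simpa using hr.2 j hjn)
    have hsub : ∀ p ∈ S, ∀ q ∈ S, p = q := by
      intro p hp q hq
      by_contra hne
      have h1 := hsep p hp q hq hne
      have h2 : orbitDist n p q ≤ δ := by
        apply Finset.sup'_le
        intro i hi
        have hin : i ≤ n := Nat.lt_succ_iff.mp (Finset.mem_range.mp hi)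
        calc dist (p i) (q i) ≤ max (dist (p i) x₀) (dist x₀ (q i)) := h _ _ _
          _ ≤ δ := max_le (by rw [dist_comm]; exact chain p (hS p hp) i hin)
              (chain q (hS q hq) i hin)
      linarith
    exact_mod_cast Set.encard_le_one_iff.mpr fun a b ha hb => hsub a ha b hb
  refine le_antisymm (iSup_le fun δ => iSup_le fun hδ => ?_) zero_le
  have h0 : (Filter.atTop.limsup fun n : ℕ =>
      elog (sepCard (id : X → X) n (δ + 1) δ x₀) / (n : ℝ≥0∞)) = 0 := by
    have hz : ∀ n : ℕ, elog (sepCard (id : X → X) n (δ + 1) δ x₀) / (n : ℝ≥0∞) = 0 := by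
      intro n
      have hle := key δ hδ n
      have hne : sepCard (id : X → X) n (δ + 1) δ x₀ ≠ ⊤ := by
        intro ht; rw [ht] at hle; exact absurd hle (by simp)
      have htr : (sepCard (id : X → X) n (δ + 1) δ x₀).toReal ≤ 1 := by
        have := ENNReal.toReal_mono (by simp : (1 : ℝ≥0∞) ≠ ⊤) hle
        simpa using this
      have hlog : Real.log (sepCard (id : X → X) n (δ + 1) δ x₀).toReal ≤ 0 :=
        Real.log_nonpos ENNReal.toReal_nonneg htr
      have : elog (sepCard (id : X → X) n (δ + 1) δ x₀) = 0 := by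
        rw [elog, if_neg hne, ENNReal.ofReal_eq_zero]; exact hlog
      simp [this]
    simp only [hz]
    exact Filter.limsup_const 0
  calc (⨅ (R : ℝ) (_ : 0 < R), Filter.atTop.limsup fun n : ℕ =>
        elog (sepCard (id : X → X) n R δ x₀) / (n : ℝ≥0∞))
      ≤ Filter.atTop.limsup fun n : ℕ =>
        elog (sepCard (id : X → X) n (δ + 1) δ x₀) / (n : ℝ≥0∞) :=
        iInf_le_of_le (δ + 1) (iInf_le_of_le (by linarith) le_rfl)
    _ = 0 := h0
end
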